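/- Composition formula for associated Stirling–Carlitz numbers of the second kind: for every integer N ≥ 0, every k ≥ 1 and every m ≥ 0, (Π(k)/Π(m)) · {m brace k}_{C,≥N} = Σ_{i_1,…,i_k ≥ 0, r^{N+i_1}+⋯+r^{N+i_k} = m} 1/(D_{N+i_1} ⋯ D_{N+i_k}), where the sum is over all ordered k-tuples of nonnegative integers (i_1,…,i_k) with r^{N+i_1}+⋯+r^{N+i_k} = m (and is empty, giving 0, if no such tuple exists). -/

import Mathlib

/-!
Carlitz module: `Fq` is a finite field with `r = Fintype.card Fq` elements (so `r` is a
power of a prime `p`), and `K = Fq(T)` is the field of rational functions over `Fq`.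
-/

noncomputable section

variable (Fq : Type*) [Field Fq] [Fintype Fq]

/-- `r`, the number of elements of the finite field `Fq` (a prime power). -/
def rq : ℕ := Fintype.card Fq

/-- `[i] = T^{r^i} − T` in `K = Fq(T)`. -/
def carlitzBracket (i : ℕ) : RatFunc Fq := RatFunc.X ^ rq Fq ^ i - RatFunc.X

/-- `D_0 = 1`, `D_i = [i]·D_{i−1}^r`. -/
def carlitzD : ℕ → RatFunc Fq
  | 0 => 1
  | i + 1 => carlitzBracket Fq (i + 1) * carlitzD i ^ rq Fq

/-- `L_0 = 1`, `L_i = [i]·L_{i−1}`. -/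
def carlitzL : ℕ → RatFunc Fq
  | 0 => 1
  | i + 1 => carlitzBracket Fq (i + 1) * carlitzL i

/-- The Carlitz factorial `Π(i) = ∏_j D_j^{c_j}`, where `i = Σ_j c_j r^j` with
`0 ≤ c_j < r` is the base-`r` expansion of `i`. -/
def carlitzPi (i : ℕ) : RatFunc Fq :=
  ∏ j ∈ Finset.range (i + 1), carlitzD Fq j ^ (Nat.digits (rq Fq) i).getD j 0

/-- The power series `Σ_{j=0}^∞ (D_N/D_{N+j}) x^{r^{N+j} − r^N}`, i.e.
`(e_C(x) − Σ_{i=0}^{N−1} x^{r^i}/D_i)·D_N/x^{r^N}`; it has constant term `1`. -/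
def bcSeries (N : ℕ) : PowerSeries (RatFunc Fq) :=
  PowerSeries.mk fun m => ∑ j ∈ Finset.range (m + 1),
    if m = rq Fq ^ (N + j) - rq Fq ^ N then carlitzD Fq N / carlitzD Fq (N + j) else 0

/-- The truncated Bernoulli–Carlitz number `BC_{N,n}`: `BC_{N,n}/Π(n)` is the `n`-th
coefficient of the multiplicative inverse of the power series
`Σ_{j=0}^∞ (D_N/D_{N+j}) x^{r^{N+j} − r^N}`. -/
def truncBC (N n : ℕ) : RatFunc Fq :=
  carlitzPi Fq n * PowerSeries.coeff (R := RatFunc Fq) n (bcSeries Fq N)⁻¹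

/-- The power series `Σ_{j=0}^∞ (−1)^j (L_N/L_{N+j}) x^{r^{N+j} − r^N}`, i.e.
`(log_C(x) − Σ_{i=0}^{N−1} (−1)^i x^{r^i}/L_i)·(−1)^N L_N/x^{r^N}`;
it has constant term `1`. -/
def ccSeries (N : ℕ) : PowerSeries (RatFunc Fq) :=
  PowerSeries.mk fun m => ∑ j ∈ Finset.range (m + 1),
    if m = rq Fq ^ (N + j) - rq Fq ^ N then
      (-1) ^ j * carlitzL Fq N / carlitzL Fq (N + j) else 0

/-- The truncated Cauchy–Carlitz number `CC_{N,n}`: `CC_{N,n}/Π(n)` is the `n`-th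
coefficient of the multiplicative inverse of the power series
`Σ_{j=0}^∞ (−1)^j (L_N/L_{N+j}) x^{r^{N+j} − r^N}`. -/
def truncCC (N n : ℕ) : RatFunc Fq :=
  carlitzPi Fq n * PowerSeries.coeff (R := RatFunc Fq) n (ccSeries Fq N)⁻¹

/-- The tail `e_C(z) − 𝓔_{N−1}(z) = Σ_{i=N}^∞ z^{r^i}/D_i` of the Carlitz exponential. -/
def carlitzExpTail (N : ℕ) : PowerSeries (RatFunc Fq) :=
  PowerSeries.mk fun m => ∑ j ∈ Finset.range (m + 1),
    if m = rq Fq ^ (N + j) then (carlitzD Fq (N + j))⁻¹ else 0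

/-- The associated Stirling–Carlitz number of the second kind `{n brace k}_{C,≥N}`,
defined by `(e_C(z) − 𝓔_{N−1}(z))^k/Π(k) = Σ_n {n brace k}_{C,≥N} z^n/Π(n)`. -/
def stirling2C (N k n : ℕ) : RatFunc Fq :=
  carlitzPi Fq n / carlitzPi Fq k * PowerSeries.coeff (R := RatFunc Fq) n (carlitzExpTail Fq N ^ k)

/-- The tail `log_C(z) − 𝓕_{N−1}(z) = Σ_{i=N}^∞ (−1)^i z^{r^i}/L_i` of the Carlitz
logarithm. -/
def carlitzLogTail (N : ℕ) : PowerSeries (RatFunc Fq) :=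
  PowerSeries.mk fun m => ∑ j ∈ Finset.range (m + 1),
    if m = rq Fq ^ (N + j) then (-1) ^ (N + j) * (carlitzL Fq (N + j))⁻¹ else 0

/-- The associated Stirling–Carlitz number of the first kind `{n brack k}_{C,≥N}`,
defined by `(log_C(z) − 𝓕_{N−1}(z))^k/Π(k) = Σ_n {n brack k}_{C,≥N} z^n/Π(n)`. -/
def stirling1C (N k n : ℕ) : RatFunc Fq :=
  carlitzPi Fq n / carlitzPi Fq k * PowerSeries.coeff (R := RatFunc Fq) n (carlitzLogTail Fq N ^ k)

private lemma rq_two_le : 2 ≤ rq Fq := Fintype.one_lt_card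

private lemma carlitzBracket_ne_zero (i : ℕ) (hi : 1 ≤ i) : carlitzBracket Fq i ≠ 0 := by
  have h2 : 2 ≤ rq Fq ^ i := le_trans (rq_two_le Fq) (Nat.le_self_pow (by omega) _)
  unfold carlitzBracket
  rw [← RatFunc.algebraMap_X (K := Fq), ← map_pow, ← map_sub]
  apply RatFunc.algebraMap_ne_zero
  intro h
  have h3 := congrArg (fun p => Polynomial.coeff p (rq Fq ^ i)) h
  simp only [Polynomial.coeff_sub, Polynomial.coeff_X_pow, if_pos rfl, Polynomial.coeff_X,
    Polynomial.coeff_zero] at h3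
  rw [if_neg (by omega : ¬ (1 = rq Fq ^ i))] at h3
  norm_num at h3

private lemma carlitzD_ne_zero (i : ℕ) : carlitzD Fq i ≠ 0 := by
  induction i with
  | zero => simp [carlitzD]
  | succ n ih =>
    exact mul_ne_zero (carlitzBracket_ne_zero Fq (n+1) (by omega)) (pow_ne_zero _ ih)

private lemma carlitzPi_ne_zero (n : ℕ) : carlitzPi Fq n ≠ 0 := by
  unfold carlitzPi
  exact Finset.prod_ne_zero_iff.mpr fun j _ => pow_ne_zero _ (carlitzD_ne_zero Fq j)

private lemma coeff_carlitzExpTail (N j : ℕ) :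
    PowerSeries.coeff (R := RatFunc Fq) (rq Fq ^ (N + j)) (carlitzExpTail Fq N)
      = (carlitzD Fq (N + j))⁻¹ := by
  rw [carlitzExpTail, PowerSeries.coeff_mk]
  rw [Finset.sum_eq_single j]
  · simp
  · intro b _ hb
    rw [if_neg]
    intro h
    exact hb (by have := Nat.pow_right_injective (rq_two_le Fq) h; omega)
  · intro hj
    refine absurd (Finset.mem_range.mpr ?_) hj
    have : N + j < rq Fq ^ (N + j) := Nat.lt_pow_self (by have := rq_two_le Fq; omega)
    omega

private lemma coeff_carlitzExpTail_zero (N l : ℕ) (h : ∀ j, l ≠ rq Fq ^ (N + j)) :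
    PowerSeries.coeff (R := RatFunc Fq) l (carlitzExpTail Fq N) = 0 := by
  rw [carlitzExpTail, PowerSeries.coeff_mk]
  exact Finset.sum_eq_zero fun j _ => if_neg (h j)

/-- composition formula for the associated Stirling–Carlitz numbers of
the second kind. -/
theorem stirling2C_composition (N k m : ℕ) (hk : 1 ≤ k) :
    carlitzPi Fq k / carlitzPi Fq m * stirling2C Fq N k m =
      ∑ᶠ (i : Fin k → ℕ) (_ : ∑ j, rq Fq ^ (N + i j) = m),
        ∏ j, (carlitzD Fq (N + i j))⁻¹ := by
  classical
  have hr := rq_two_le Fq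
  have hpk := carlitzPi_ne_zero Fq k
  have hpm := carlitzPi_ne_zero Fq m
  have hL : carlitzPi Fq k / carlitzPi Fq m * stirling2C Fq N k m
      = PowerSeries.coeff (R := RatFunc Fq) m (carlitzExpTail Fq N ^ k) := by
    unfold stirling2C
    field_simp
  rw [hL]
  have hR : (∑ᶠ (i : Fin k → ℕ) (_ : ∑ j, rq Fq ^ (N + i j) = m),
        ∏ j, (carlitzD Fq (N + i j))⁻¹)
      = ∑ i ∈ Fintype.piFinset (fun _ : Fin k => Finset.range (m+1)),
          if ∑ j, rq Fq ^ (N + i j) = m then ∏ j, (carlitzD Fq (N + i j))⁻¹ else 0 := by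
    rw [finsum_congr (fun i => finsum_eq_if)]
    apply finsum_eq_sum_of_support_subset
    intro i hi
    have hcond : ∑ j, rq Fq ^ (N + i j) = m := by
      by_contra hc
      simp [hc] at hi
    simp only [Finset.coe_sort_coe, Finset.mem_coe, Fintype.mem_piFinset, Finset.mem_range]
    intro j
    have h1 : rq Fq ^ (N + i j) ≤ m := by
      rw [← hcond]
      exact Finset.single_le_sum (f := fun j => rq Fq ^ (N + i j))
        (fun _ _ => Nat.zero_le _) (Finset.mem_univ j)
    have h2 : N + i j < rq Fq ^ (N + i j) := Nat.lt_pow_self (by omega)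
    omega
  rw [hR]
  have hpow : carlitzExpTail Fq N ^ k = ∏ _j : Fin k, carlitzExpTail Fq N := by
    simp [Finset.prod_const]
  rw [hpow, PowerSeries.coeff_prod]
  rw [← Finset.sum_filter]
  rw [← Finset.sum_filter_of_ne
    (p := fun l : Fin k →₀ ℕ => ∀ j, ∃ i, l j = rq Fq ^ (N + i))
    (fun l _ hl0 => by
      by_contra hg
      rw [not_forall] at hg
      obtain ⟨j, hj⟩ := hg
      push_neg at hj
      exact hl0 (Finset.prod_eq_zero (Finset.mem_univ j)
        (coeff_carlitzExpTail_zero Fq N (l j) hj)))]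
  refine (Finset.sum_bij
    (fun (i : Fin k → ℕ) _ => Finsupp.equivFunOnFinite.symm (fun j => rq Fq ^ (N + i j)))
    ?_ ?_ ?_ ?_).symm
  · intro i hi
    simp only [Finset.mem_filter, Fintype.mem_piFinset, Finset.mem_range] at hi
    obtain ⟨hmem, hcond⟩ := hi
    simp only [Finset.mem_filter, Finset.mem_finsuppAntidiag]
    refine ⟨⟨?_, Finset.subset_univ _⟩, ?_⟩
    · simpa using hcond
    · intro j
      exact ⟨i j, by simp⟩
  · intro i₁ h₁ i₂ h₂ heq
    funext j
    have := congrArg (fun l : Fin k →₀ ℕ => l j) heq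
    simp only [Finsupp.coe_equivFunOnFinite_symm] at this
    have := Nat.pow_right_injective hr this
    omega
  · intro l hl
    simp only [Finset.mem_filter, Finset.mem_finsuppAntidiag] at hl
    obtain ⟨⟨hsum, -⟩, hgood⟩ := hl
    refine ⟨fun j => (hgood j).choose, ?_, ?_⟩
    · have hspec : ∀ j, l j = rq Fq ^ (N + (hgood j).choose) := fun j => (hgood j).choose_spec
      simp only [Finset.mem_filter, Fintype.mem_piFinset, Finset.mem_range]
      constructor
      · intro j
        have h1 : l j ≤ m := by
          rw [← hsum]
          exact Finset.single_le_sum (f := fun j => l j)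
            (fun _ _ => Nat.zero_le _) (Finset.mem_univ j)
        have h2 : N + (hgood j).choose < rq Fq ^ (N + (hgood j).choose) :=
          Nat.lt_pow_self (by omega)
        rw [hspec j] at h1
        omega
      · rw [← hsum]
        exact Finset.sum_congr rfl fun j _ => (hspec j).symm
    · ext j
      simp [((hgood j).choose_spec).symm]
  · intro i hi
    refine Finset.prod_congr rfl fun j _ => ?_
    simp only [Finsupp.coe_equivFunOnFinite_symm, coeff_carlitzExpTail]

end
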